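/- Let L ≥ 1 and N ≥ 1 be integers. Let θ be uniformly distributed on the circle ℝ/(2πℤ), let U be uniform on {0, 1, …, N-1} independent of θ, and let V be uniform on the interval [-π/(NL), π/(NL)) independent of (θ, U). Define the reconstruction angle θ̂ = (2π/L)·( round(θ·L/(2π) - U/N) + U/N ) + V, taken modulo 2π, where round(·) rounds to the nearest integer. Then θ̂ is uniformly distributed on ℝ/(2πℤ); i.e., the staggered quantization procedure achieves perfect perceptual quality for the uniform source on the circle. -/

import Mathlib

open MeasureTheory ProbabilityTheory Real

instance : Fact ((0 : ℝ) < 2 * π) := ⟨by positivity⟩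

/-- The uniform (normalized Haar) probability measure on the circle `ℝ/(2πℤ)`. -/
noncomputable def circleUniform : Measure (AddCircle (2 * π)) :=
  (volume (Set.univ : Set (AddCircle (2 * π))))⁻¹ • volume

open Set

namespace StagHelper

lemma measurable_round' : Measurable (round : ℝ → ℤ) := by
  have h : (round : ℝ → ℤ) = fun x => ⌊x + 1 / 2⌋ := funext fun x => round_eq x
  rw [h]
  exact Int.measurable_floor.comp (measurable_id.add_const _)

lemma measurable_repr : Measurable fun t : AddCircle (2 * π) => (AddCircle.equivIco (2 * π) 0 t : ℝ) :=
  measurable_subtype_coe.comp (AddCircle.measurableEquivIco (2 * π) 0).measurable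

lemma measurable_mk2 : Measurable (fun x : ℝ => (x : AddCircle (2 * π))) :=
  AddCircle.measurable_mk'

/-- arc measure: image on the circle of the `j`-th arc of half-width `π/(NL)`. -/
noncomputable def arcM (N L : ℕ) (j : ℕ) : Measure (AddCircle (2 * π)) :=
  Measure.map (fun x : ℝ => (x : AddCircle (2 * π)))
    (volume.restrict
      (Ico (-(π / (N * L)) + (j : ℝ) * (2 * (π / (N * L))))
           (-(π / (N * L)) + ((j : ℝ) + 1) * (2 * (π / (N * L))))))

lemma meas_psi (c γ : ℝ) :
    Measurable (fun p : ℝ × ℝ =>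
      ((c * ((round (p.1 * c⁻¹ - γ) : ℤ) + γ) + p.2 : ℝ) : AddCircle (2 * π))) := by
  apply measurable_mk2.comp
  exact ((((measurable_fst.mul_const _).sub_const _ |> measurable_round'.comp
      |> (measurable_from_top (f := fun z : ℤ => (z : ℝ))).comp).add_const γ).const_mul c).add
    measurable_snd

end StagHelper

namespace StagHelper

lemma map_finset_sum {ι α β : Type*} [MeasurableSpace α] [MeasurableSpace β]
    (s : Finset ι) (μ : ι → Measure α) {f : α → β} (hf : Measurable f) :
    Measure.map f (∑ i ∈ s, μ i) = ∑ i ∈ s, Measure.map f (μ i) := by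
  classical
  induction s using Finset.induction_on with
  | empty => simp
  | insert _ _ hx ih =>
      rw [Finset.sum_insert hx, Finset.sum_insert hx, Measure.map_add _ _ hf, ih]

lemma finset_sum_prod {ι α β : Type*} [MeasurableSpace α] [MeasurableSpace β]
    (s : Finset ι) (μ : ι → Measure α) (ν : Measure β) [SFinite ν] :
    (∑ i ∈ s, μ i).prod ν = ∑ i ∈ s, (μ i).prod ν := by
  ext t ht
  rw [Measure.prod_apply ht, Measure.finset_sum_apply, lintegral_finset_sum_measure]
  exact Finset.sum_congr rfl fun i _ => (Measure.prod_apply ht).symm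

lemma prod_smul_left {α β : Type*} [MeasurableSpace α] [MeasurableSpace β]
    (c : ENNReal) (μ : Measure α) (ν : Measure β) [SFinite μ] [SFinite ν] :
    (c • μ).prod ν = c • (μ.prod ν) := by
  ext s hs
  simp [Measure.prod_apply hs, lintegral_smul_measure]

lemma prod_smul_right {α β : Type*} [MeasurableSpace α] [MeasurableSpace β]
    (c : ENNReal) (hc : c ≠ ⊤) (μ : Measure α) (ν : Measure β) [SFinite ν] :
    μ.prod (c • ν) = c • (μ.prod ν) := by
  ext s hs
  rw [Measure.smul_apply, Measure.prod_apply hs, Measure.prod_apply hs, smul_eq_mul]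
  simp_rw [Measure.smul_apply, smul_eq_mul]
  rw [lintegral_const_mul' _ _ hc]

lemma tile_sum (a w : ℝ) (hw : 0 ≤ w) (m : ℕ) :
    ∑ j ∈ Finset.range m, volume.restrict (Ico (a + j * w) (a + (j + 1) * w))
      = volume.restrict (Ico a (a + m * w)) := by
  induction m with
  | zero => simp
  | succ m ih =>
      rw [Finset.sum_range_succ, ih]
      have h1 : a ≤ a + m * w := le_add_of_nonneg_right (by positivity)
      have h2 : a + (m : ℝ) * w ≤ a + ((m : ℝ) + 1) * w := by nlinarith
      have hcast : a + ((m + 1 : ℕ) : ℝ) * w = a + ((m : ℝ) + 1) * w := by push_cast; ring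
      rw [hcast, ← Set.Ico_union_Ico_eq_Ico h1 h2,
        Measure.restrict_union (Set.Ico_disjoint_Ico_same) measurableSet_Ico]

lemma map_add_restrict (c h : ℝ) :
    Measure.map (fun v : ℝ => c + v) (volume.restrict (Ico (-h) h))
      = volume.restrict (Ico (c - h) (c + h)) := by
  have hpre : (fun v : ℝ => c + v) ⁻¹' (Ico (c - h) (c + h)) = Ico (-h) h := by
    ext x
    simp only [Set.mem_preimage, Set.mem_Ico]
    constructor <;> rintro ⟨h1, h2⟩ <;> constructor <;> linarith
  have h2 := (measurePreserving_add_left (volume : Measure ℝ) c).restrict_preimage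
    (s := Ico (c - h) (c + h)) measurableSet_Ico
  rw [hpre] at h2
  exact h2.map_eq

lemma nuN (L N : ℕ) (hL : 1 ≤ L) (hN : 1 ≤ N) (n : ℕ) (hn : n < N) :
    Measure.map
      (fun p : AddCircle (2 * π) × ℝ =>
        (((2 * π / L) *
            (((round ((AddCircle.equivIco (2 * π) 0 p.1 : ℝ) * L / (2 * π)
                - (n : ℝ) / N) : ℤ) : ℝ) + (n : ℝ) / N) + p.2 : ℝ) : AddCircle (2 * π)))
      (circleUniform.prod
        ((volume (Ico (-(π / (N * L))) (π / (N * L))))⁻¹ •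
          volume.restrict (Ico (-(π / (N * L))) (π / (N * L)))))
      = (ENNReal.ofReal (2 * π))⁻¹ •
          ((N : ENNReal) • ∑ k ∈ Finset.range L, arcM N L (k * N + n)) := by
  have hπ : (0 : ℝ) < π := pi_pos
  have hLpos : (0 : ℝ) < L := by exact_mod_cast hL
  have hNpos : (0 : ℝ) < N := by exact_mod_cast hN
  have hLne : (L : ℝ) ≠ 0 := ne_of_gt hLpos
  have hNne : (N : ℝ) ≠ 0 := ne_of_gt hNpos
  have h2πne : (2 * π) ≠ 0 := by positivity
  have hwpos : (0 : ℝ) < 2 * π / L := by positivity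
  have hδpos : (0 : ℝ) < π / (N * L) := by positivity
  set a : ℝ := (2 * π / L) * ((n : ℝ) / N) - (2 * π / L) / 2 with ha_def
  -- the J-interval has measure ofReal (2δ)
  have hJ : volume (Ico (-(π / (N * L))) (π / (N * L)))
      = ENNReal.ofReal (2 * (π / (N * L))) := by
    rw [Real.volume_Ico]; congr 1; ring
  -- circleUniform as normalized pushforward of [a, a + 2π)
  have hvol : (volume : Measure (AddCircle (2 * π))) =
      Measure.map (fun x : ℝ => (x : AddCircle (2 * π)))
        (volume.restrict (Ico a (a + 2 * π))) := by
    rw [Measure.restrict_congr_set Ico_ae_eq_Ioc]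
    exact ((AddCircle.measurePreserving_mk (2 * π) a).map_eq).symm
  have hcirc : circleUniform =
      (ENNReal.ofReal (2 * π))⁻¹ • Measure.map (fun x : ℝ => (x : AddCircle (2 * π)))
        (volume.restrict (Ico a (a + 2 * π))) := by
    rw [circleUniform, AddCircle.measure_univ, ← hvol]
  -- measurability
  have hΦ : Measurable (fun p : AddCircle (2 * π) × ℝ =>
      (((2 * π / L) *
          (((round ((AddCircle.equivIco (2 * π) 0 p.1 : ℝ) * L / (2 * π)
              - (n : ℝ) / N) : ℤ) : ℝ) + (n : ℝ) / N) + p.2 : ℝ) : AddCircle (2 * π))) := by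
    apply measurable_mk2.comp
    exact (((((measurable_repr.comp measurable_fst).mul_const _).div_const _
        |>.sub_const _ |> measurable_round'.comp
        |> (measurable_from_top (f := fun z : ℤ => (z : ℝ))).comp).add_const _).const_mul _).add
      measurable_snd
  have hΨ : Measurable (fun p : ℝ × ℝ =>
      (((2 * π / L) * (((round (p.1 * L / (2 * π) - (n : ℝ) / N) : ℤ) : ℝ)
          + (n : ℝ) / N) + p.2 : ℝ) : AddCircle (2 * π))) := by
    apply measurable_mk2.comp
    exact ((((measurable_fst.mul_const _).div_const _
        |>.sub_const _ |> measurable_round'.comp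
        |> (measurable_from_top (f := fun z : ℤ => (z : ℝ))).comp).add_const _).const_mul _).add
      measurable_snd
  have hcJtop : (volume (Ico (-(π / (N * L))) (π / (N * L))))⁻¹ ≠ ⊤ :=
    ENNReal.inv_ne_top.2 (by rw [hJ]; exact (ENNReal.ofReal_pos.2 (by positivity)).ne')
  rw [hcirc, prod_smul_left, Measure.map_smul, prod_smul_right _ hcJtop, Measure.map_smul]
  -- replace the pair-measure by pushing the quotient map inside
  have hprodmap : (Measure.map (fun x : ℝ => (x : AddCircle (2 * π)))
        (volume.restrict (Ico a (a + 2 * π)))).prod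
        (volume.restrict (Ico (-(π / (N * L))) (π / (N * L))))
      = Measure.map (Prod.map (fun x : ℝ => (x : AddCircle (2 * π))) id)
        ((volume.restrict (Ico a (a + 2 * π))).prod
          (volume.restrict (Ico (-(π / (N * L))) (π / (N * L))))) := by
    have := Measure.map_prod_map (f := fun x : ℝ => (x : AddCircle (2 * π))) (g := (id : ℝ → ℝ))
      (volume.restrict (Ico a (a + 2 * π)))
      (volume.restrict (Ico (-(π / (N * L))) (π / (N * L)))) measurable_mk2 measurable_id
    rw [Measure.map_id] at this
    exact this
  rw [hprodmap, Measure.map_map hΦ (measurable_mk2.prodMap measurable_id)]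
  have hdescend : ((fun p : AddCircle (2 * π) × ℝ =>
        (((2 * π / L) *
            (((round ((AddCircle.equivIco (2 * π) 0 p.1 : ℝ) * L / (2 * π)
                - (n : ℝ) / N) : ℤ) : ℝ) + (n : ℝ) / N) + p.2 : ℝ) : AddCircle (2 * π)))
      ∘ (Prod.map (fun x : ℝ => (x : AddCircle (2 * π))) (id : ℝ → ℝ))) =
      (fun p : ℝ × ℝ =>
        (((2 * π / L) * (((round (p.1 * L / (2 * π) - (n : ℝ) / N) : ℤ) : ℝ)
            + (n : ℝ) / N) + p.2 : ℝ) : AddCircle (2 * π))) := by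
    funext p
    obtain ⟨x, v⟩ := p
    simp only [Function.comp_apply, Prod.map_apply, id_eq]
    have hrepx : (AddCircle.equivIco (2 * π) 0 ((x : ℝ) : AddCircle (2 * π)) : ℝ)
        = x - (⌊x / (2 * π)⌋ : ℝ) * (2 * π) := by
      rw [AddCircle.coe_equivIco_mk_apply, Int.fract]
      field_simp
    rw [hrepx]
    have harg : (x - (⌊x / (2 * π)⌋ : ℝ) * (2 * π)) * L / (2 * π) - (n : ℝ) / N
        = (x * L / (2 * π) - (n : ℝ) / N) - ((⌊x / (2 * π)⌋ * L : ℤ) : ℝ) := by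
      push_cast
      field_simp
      ring
    rw [harg, round_sub_intCast]
    have hkey : (2 * π / L) *
          (((round (x * L / (2 * π) - (n : ℝ) / N) - ⌊x / (2 * π)⌋ * L : ℤ) : ℝ) + (n : ℝ) / N) + v
        = ((2 * π / L) * (((round (x * L / (2 * π) - (n : ℝ) / N) : ℤ) : ℝ) + (n : ℝ) / N) + v)
            + (-(⌊x / (2 * π)⌋ : ℝ) * (2 * π)) := by
      push_cast
      field_simp
      ring
    rw [hkey, AddCircle.coe_add]
    have h0 : ((-(⌊x / (2 * π)⌋ : ℝ) * (2 * π) : ℝ) : AddCircle (2 * π)) = 0 := by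
      rw [AddCircle.coe_eq_zero_iff]
      exact ⟨-⌊x / (2 * π)⌋, by push_cast [zsmul_eq_mul]; ring⟩
    rw [h0, add_zero]
  rw [hdescend]
  -- tile the interval [a, a+2π) into L cells
  have h2pi : a + 2 * π = a + (L : ℝ) * (2 * π / L) := by field_simp
  rw [h2pi, ← tile_sum a (2 * π / L) hwpos.le L, finset_sum_prod, map_finset_sum _ _ hΨ]
  -- per-cell computation
  have hcell : ∀ k ∈ Finset.range L,
      Measure.map (fun p : ℝ × ℝ =>
        (((2 * π / L) * (((round (p.1 * L / (2 * π) - (n : ℝ) / N) : ℤ) : ℝ)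
            + (n : ℝ) / N) + p.2 : ℝ) : AddCircle (2 * π)))
        ((volume.restrict (Ico (a + k * (2 * π / L)) (a + (k + 1) * (2 * π / L)))).prod
          (volume.restrict (Ico (-(π / (N * L))) (π / (N * L)))))
      = ENNReal.ofReal (2 * π / L) • arcM N L (k * N + n) := by
    intro k hk
    set c : ℝ := (2 * π / L) * ((k : ℝ) + (n : ℝ) / N) with hc_def
    have hround : ∀ x ∈ Ico (a + (k : ℝ) * (2 * π / L)) (a + ((k : ℝ) + 1) * (2 * π / L)),
        round (x * L / (2 * π) - (n : ℝ) / N) = (k : ℤ) := by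
      intro x hx
      have hkeyx : (2 * π / L) * (x * L / (2 * π)) = x := by field_simp
      have hlow : a + (k : ℝ) * (2 * π / L) = (2 * π / L) * ((n : ℝ) / N - 1 / 2 + k) := by
        rw [ha_def]; ring
      have hhigh : a + ((k : ℝ) + 1) * (2 * π / L)
          = (2 * π / L) * ((n : ℝ) / N - 1 / 2 + k + 1) := by
        rw [ha_def]; ring
      have h1 : (n : ℝ) / N - 1 / 2 + k ≤ x * L / (2 * π) := by
        have := hx.1
        rw [hlow, ← hkeyx] at this
        exact (mul_le_mul_iff_right₀ hwpos).mp this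
      have h2 : x * L / (2 * π) < (n : ℝ) / N - 1 / 2 + k + 1 := by
        have := hx.2
        rw [hhigh] at this
        nth_rewrite 1 [← hkeyx] at this
        exact (mul_lt_mul_iff_right₀ hwpos).mp this
      rw [round_eq]
      refine Int.floor_eq_iff.2 ⟨?_, ?_⟩ <;> push_cast <;> [linarith; linarith]
    have hnull : ((volume.restrict (Ico (a + (k:ℝ) * (2 * π / L)) (a + ((k:ℝ) + 1) * (2 * π / L)))).prod
        (volume.restrict (Ico (-(π / (N * L))) (π / (N * L)))))
        (((Ico (a + (k:ℝ) * (2 * π / L)) (a + ((k:ℝ) + 1) * (2 * π / L)))ᶜ) ×ˢ univ) = 0 := by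
      rw [Measure.prod_prod, Measure.restrict_apply measurableSet_Ico.compl]
      simp
    have hmem : ∀ᵐ p : ℝ × ℝ ∂((volume.restrict (Ico (a + (k:ℝ) * (2 * π / L)) (a + ((k:ℝ) + 1) * (2 * π / L)))).prod
        (volume.restrict (Ico (-(π / (N * L))) (π / (N * L))))),
        p.1 ∈ Ico (a + (k:ℝ) * (2 * π / L)) (a + ((k:ℝ) + 1) * (2 * π / L)) := by
      rw [ae_iff]
      refine measure_mono_null (fun p hp => ?_) hnull
      exact ⟨hp, trivial⟩
    have hae : (fun p : ℝ × ℝ =>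
        (((2 * π / L) * (((round (p.1 * L / (2 * π) - (n : ℝ) / N) : ℤ) : ℝ)
            + (n : ℝ) / N) + p.2 : ℝ) : AddCircle (2 * π)))
        =ᵐ[((volume.restrict (Ico (a + (k:ℝ) * (2 * π / L)) (a + ((k:ℝ) + 1) * (2 * π / L)))).prod
          (volume.restrict (Ico (-(π / (N * L))) (π / (N * L)))))]
        (fun p : ℝ × ℝ => ((c + p.2 : ℝ) : AddCircle (2 * π))) := by
      filter_upwards [hmem] with p hp
      rw [hround p.1 hp, hc_def]
      norm_num
    rw [Measure.map_congr hae]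
    have hsplit : (fun p : ℝ × ℝ => ((c + p.2 : ℝ) : AddCircle (2 * π)))
        = (fun v : ℝ => ((c + v : ℝ) : AddCircle (2 * π))) ∘ Prod.snd := rfl
    have hgm : Measurable (fun v : ℝ => ((c + v : ℝ) : AddCircle (2 * π))) := by
      exact measurable_mk2.comp (measurable_const_add c)
    rw [hsplit, ← Measure.map_map hgm measurable_snd,
      Measure.map_snd_prod, Measure.restrict_apply_univ]
    have hcellvol : volume (Ico (a + (k:ℝ) * (2 * π / L)) (a + ((k:ℝ) + 1) * (2 * π / L)))
        = ENNReal.ofReal (2 * π / L) := by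
      rw [Real.volume_Ico]; congr 1; ring
    rw [hcellvol, Measure.map_smul]
    congr 1
    have hcomp : (fun v : ℝ => ((c + v : ℝ) : AddCircle (2 * π)))
        = (fun x : ℝ => (x : AddCircle (2 * π))) ∘ (fun v : ℝ => c + v) := rfl
    have haddm : Measurable (fun v : ℝ => c + v) := measurable_const_add c
    rw [hcomp, ← Measure.map_map measurable_mk2 haddm,
      map_add_restrict c (π / (N * L))]
    unfold arcM
    have e1 : c - π / (N * L)
        = -(π / (N * L)) + ((k * N + n : ℕ) : ℝ) * (2 * (π / (N * L))) := by
      push_cast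
      rw [hc_def]
      field_simp
      ring
    have e2 : c + π / (N * L)
        = -(π / (N * L)) + (((k * N + n : ℕ) : ℝ) + 1) * (2 * (π / (N * L))) := by
      push_cast
      rw [hc_def]
      field_simp
      ring
    rw [e1, e2]
  rw [Finset.sum_congr rfl hcell, ← Finset.smul_sum]
  congr 1
  have hwN : 2 * π / L = (N : ℝ) * (2 * (π / (N * L))) := by field_simp
  rw [smul_smul, hJ, hwN, ENNReal.ofReal_mul (p := (N : ℝ)) (by positivity), ENNReal.ofReal_natCast]
  congr 1
  have hne0 : ENNReal.ofReal (2 * (π / (N * L))) ≠ 0 :=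
    (ENNReal.ofReal_pos.2 (by positivity)).ne'
  have hnetop : ENNReal.ofReal (2 * (π / (N * L))) ≠ ⊤ := ENNReal.ofReal_ne_top
  calc (ENNReal.ofReal (2 * (π / (N * L))))⁻¹ * ((N : ENNReal) * ENNReal.ofReal (2 * (π / (N * L))))
      = (N : ENNReal) * ((ENNReal.ofReal (2 * (π / (N * L))))⁻¹ * ENNReal.ofReal (2 * (π / (N * L)))) := by ring
    _ = (N : ENNReal) := by rw [ENNReal.inv_mul_cancel hne0 hnetop, mul_one]

end StagHelper

namespace StagHelper

lemma reindexNL (N L : ℕ) (hN : 0 < N) (f : ℕ → Measure (AddCircle (2 * π))) :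
    ∑ i ∈ Finset.range N, ∑ k ∈ Finset.range L, f (k * N + i)
      = ∑ j ∈ Finset.range (N * L), f j := by
  rw [← Finset.sum_product']
  refine Finset.sum_nbij' (fun p => p.2 * N + p.1) (fun j => (j % N, j / N)) ?_ ?_ ?_ ?_ ?_
  · rintro ⟨i, k⟩ hp
    simp only [Finset.mem_product, Finset.mem_range] at hp
    simp only [Finset.mem_range]
    calc k * N + i < k * N + N := by omega
      _ = (k + 1) * N := by ring
      _ ≤ L * N := Nat.mul_le_mul_right N hp.2
      _ = N * L := Nat.mul_comm L N
  · intro j hj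
    simp only [Finset.mem_range] at hj
    simp only [Finset.mem_product, Finset.mem_range]
    exact ⟨Nat.mod_lt j hN, (Nat.div_lt_iff_lt_mul hN).2 (by rw [Nat.mul_comm]; exact hj)⟩
  · rintro ⟨i, k⟩ hp
    simp only [Finset.mem_product, Finset.mem_range] at hp
    have h1 : (k * N + i) % N = i := by
      rw [add_comm, Nat.add_mul_mod_self_right, Nat.mod_eq_of_lt hp.1]
    have h2 : (k * N + i) / N = k := by
      rw [add_comm, Nat.add_mul_div_right _ _ hN, Nat.div_eq_of_lt hp.1, zero_add]
    simp [h1, h2]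
  · intro j hj
    show j / N * N + j % N = j
    rw [Nat.mul_comm]
    exact Nat.div_add_mod j N
  · rintro ⟨i, k⟩ hp
    rfl

end StagHelper

open StagHelper

/-- Theorem 1 (perfect perceptual quality): for `θ` uniform on the circle `ℝ/(2πℤ)`,
`U` uniform on `{0, …, N-1}` independent of `θ`, and `V` uniform on
`[-π/(NL), π/(NL))` independent of `(θ, U)`, the staggered-quantizer reconstruction
`θ̂ = (2π/L)(round(θ·L/(2π) - U/N) + U/N) + V  (mod 2π)` is uniform on `ℝ/(2πℤ)`.
Here `θ` is represented by its canonical representative in `[0, 2π)`. -/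
theorem staggered_quantizer_perfect_perception
    (L N : ℕ) (hL : 1 ≤ L) (hN : 1 ≤ N)
    {Ω : Type*} [MeasurableSpace Ω] (μ : Measure Ω) [IsProbabilityMeasure μ]
    (θ : Ω → AddCircle (2 * π)) (U : Ω → Fin N) (V : Ω → ℝ)
    (hθm : Measurable θ) (hUm : Measurable U) (hVm : Measurable V)
    (hθ : Measure.map θ μ = circleUniform)
    (hU : ∀ n : Fin N, μ (U ⁻¹' {n}) = (N : ENNReal)⁻¹)
    (hV : Measure.map V μ =
      (volume (Set.Ico (-(π / (N * L))) (π / (N * L))))⁻¹ •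
        volume.restrict (Set.Ico (-(π / (N * L))) (π / (N * L))))
    (hθU : IndepFun θ U μ)
    (hVindep : IndepFun (fun ω => (θ ω, U ω)) V μ) :
    Measure.map
      (fun ω =>
        (((2 * π / L) *
              ((round ((AddCircle.equivIco (2 * π) 0 (θ ω) : ℝ) * L / (2 * π)
                  - ((U ω : ℕ) : ℝ) / N) : ℝ) + ((U ω : ℕ) : ℝ) / N)
            + V ω : ℝ) : AddCircle (2 * π))) μ
      = circleUniform := by
  have hπ : (0 : ℝ) < π := pi_pos
  have hNpos : (0 : ℝ) < N := by exact_mod_cast hN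
  have hLpos : (0 : ℝ) < L := by exact_mod_cast hL
  have hδpos : (0 : ℝ) < π / (N * L) := by positivity
  -- circleUniform is a probability measure
  haveI : IsProbabilityMeasure circleUniform := by
    constructor
    rw [circleUniform, Measure.smul_apply, smul_eq_mul, AddCircle.measure_univ]
    exact ENNReal.inv_mul_cancel (ENNReal.ofReal_pos.2 (by positivity)).ne'
      ENNReal.ofReal_ne_top
  -- the reconstruction map as a function of the triple
  set G : (AddCircle (2 * π) × Fin N) × ℝ → AddCircle (2 * π) := fun q =>
    (((2 * π / L) *
        ((round ((AddCircle.equivIco (2 * π) 0 q.1.1 : ℝ) * L / (2 * π)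
            - ((q.1.2 : ℕ) : ℝ) / N) : ℝ) + ((q.1.2 : ℕ) : ℝ) / N)
      + q.2 : ℝ) : AddCircle (2 * π)) with hG_def
  have hFinm : Measurable (fun u : Fin N => ((u : ℕ) : ℝ)) := measurable_from_top
  have hGm : Measurable G := by
    rw [hG_def]
    apply measurable_mk2.comp
    refine Measurable.add ?_ measurable_snd
    refine Measurable.const_mul (Measurable.add ?_ ?_) _
    · refine (measurable_from_top (f := fun z : ℤ => (z : ℝ))).comp
        (measurable_round'.comp ?_)
      exact (((measurable_repr.comp (measurable_fst.comp measurable_fst)).mul_const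
        _).div_const _).sub ((hFinm.comp (measurable_snd.comp measurable_fst)).div_const _)
    · exact (hFinm.comp (measurable_snd.comp measurable_fst)).div_const _
  -- joint law of ((θ, U), V)
  have hpair : Measure.map (fun ω => (θ ω, U ω)) μ = circleUniform.prod (Measure.map U μ) := by
    have h := (indepFun_iff_map_prod_eq_prod_map_map hθm.aemeasurable hUm.aemeasurable).mp hθU
    rw [h, hθ]
  have htrip : Measure.map (fun ω => ((θ ω, U ω), V ω)) μ
      = (circleUniform.prod (Measure.map U μ)).prod
        ((volume (Set.Ico (-(π / (N * L))) (π / (N * L))))⁻¹ •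
          volume.restrict (Set.Ico (-(π / (N * L))) (π / (N * L)))) := by
    have h := (indepFun_iff_map_prod_eq_prod_map_map
      (hθm.prodMk hUm).aemeasurable hVm.aemeasurable).mp hVindep
    rw [h, hpair, hV]
  -- law of U as a finite combination of Dirac masses
  have hUlaw : Measure.map U μ
      = Measure.sum (fun i : Fin N => (N : ENNReal)⁻¹ • Measure.dirac i) := by
    refine (Measure.sum_smul_dirac (Measure.map U μ)).symm.trans ?_
    congr 1
    funext i
    rw [Measure.map_apply hUm (measurableSet_singleton i), hU i]
  -- rewrite the target as a pushforward of the joint law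
  have hcomp : (fun ω =>
        (((2 * π / L) *
              ((round ((AddCircle.equivIco (2 * π) 0 (θ ω) : ℝ) * L / (2 * π)
                  - ((U ω : ℕ) : ℝ) / N) : ℝ) + ((U ω : ℕ) : ℝ) / N)
            + V ω : ℝ) : AddCircle (2 * π)))
      = G ∘ (fun ω => ((θ ω, U ω), V ω)) := rfl
  rw [hcomp, ← Measure.map_map hGm ((hθm.prodMk hUm).prodMk hVm), htrip, hUlaw,
    Measure.prod_sum_right, Measure.prod_sum_left,
    Measure.map_sum hGm.aemeasurable, Measure.sum_fintype]
  -- compute each summand using the per-offset lemma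
  have hinvtop : ((N : ENNReal))⁻¹ ≠ ⊤ :=
    ENNReal.inv_ne_top.2 (Nat.cast_ne_zero.2 (Nat.one_le_iff_ne_zero.1 hN))
  have hterm : ∀ i : Fin N,
      Measure.map G ((circleUniform.prod ((N : ENNReal)⁻¹ • Measure.dirac i)).prod
        ((volume (Set.Ico (-(π / (N * L))) (π / (N * L))))⁻¹ •
          volume.restrict (Set.Ico (-(π / (N * L))) (π / (N * L)))))
      = (ENNReal.ofReal (2 * π))⁻¹ • ∑ k ∈ Finset.range L, arcM N L (k * N + (i : ℕ)) := by
    intro i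
    rw [prod_smul_right _ hinvtop, prod_smul_left, Measure.map_smul, Measure.prod_dirac]
    have hpm : (Measure.map (fun t : AddCircle (2 * π) => (t, i)) circleUniform).prod
        ((volume (Set.Ico (-(π / (N * L))) (π / (N * L))))⁻¹ •
          volume.restrict (Set.Ico (-(π / (N * L))) (π / (N * L))))
        = Measure.map (Prod.map (fun t : AddCircle (2 * π) => (t, i)) (id : ℝ → ℝ))
          (circleUniform.prod
            ((volume (Set.Ico (-(π / (N * L))) (π / (N * L))))⁻¹ •
              volume.restrict (Set.Ico (-(π / (N * L))) (π / (N * L))))) := by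
      have h := Measure.map_prod_map (f := fun t : AddCircle (2 * π) => (t, i))
        (g := (id : ℝ → ℝ)) circleUniform
        ((volume (Set.Ico (-(π / (N * L))) (π / (N * L))))⁻¹ •
          volume.restrict (Set.Ico (-(π / (N * L))) (π / (N * L))))
        (measurable_id.prodMk measurable_const) measurable_id
      rw [Measure.map_id] at h
      exact h
    have hmap1 : Measurable (fun t : AddCircle (2 * π) => (t, i)) :=
      measurable_id.prodMk measurable_const
    rw [hpm, Measure.map_map hGm (hmap1.prodMap measurable_id)]
    have hGcomp : (G ∘ Prod.map (fun t : AddCircle (2 * π) => (t, i)) (id : ℝ → ℝ))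
        = (fun p : AddCircle (2 * π) × ℝ =>
        (((2 * π / L) *
            (((round ((AddCircle.equivIco (2 * π) 0 p.1 : ℝ) * L / (2 * π)
                - ((i : ℕ) : ℝ) / N) : ℤ) : ℝ) + ((i : ℕ) : ℝ) / N) + p.2 : ℝ)
          : AddCircle (2 * π))) := rfl
    rw [hGcomp, nuN L N hL hN (i : ℕ) i.isLt, smul_smul, smul_smul]
    congr 1
    have hN0 : (N : ENNReal) ≠ 0 := Nat.cast_ne_zero.2 (Nat.one_le_iff_ne_zero.1 hN)
    have hNtop : (N : ENNReal) ≠ ⊤ := ENNReal.natCast_ne_top N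
    calc (N : ENNReal)⁻¹ * (ENNReal.ofReal (2 * π))⁻¹ * (N : ENNReal)
        = (ENNReal.ofReal (2 * π))⁻¹ * ((N : ENNReal)⁻¹ * (N : ENNReal)) := by ring
      _ = (ENNReal.ofReal (2 * π))⁻¹ := by
          rw [ENNReal.inv_mul_cancel hN0 hNtop, mul_one]
  rw [Finset.sum_congr rfl (fun i _ => hterm i), ← Finset.smul_sum]
  -- reindex the double sum into a single tiling sum
  have hdouble : ∑ i : Fin N, ∑ k ∈ Finset.range L, arcM N L (k * N + (i : ℕ))
      = ∑ j ∈ Finset.range (N * L), arcM N L j := by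
    rw [← reindexNL N L (Nat.lt_of_lt_of_le Nat.zero_lt_one hN) (arcM N L)]
    exact Fin.sum_univ_eq_sum_range (fun i => ∑ k ∈ Finset.range L, arcM N L (k * N + i)) N
  rw [hdouble]
  -- the arcs tile the circle
  have harcsum : ∑ j ∈ Finset.range (N * L), arcM N L j
      = Measure.map (fun x : ℝ => (x : AddCircle (2 * π)))
          (volume.restrict (Set.Ico (-(π / (N * L)))
            (-(π / (N * L)) + ((N * L : ℕ) : ℝ) * (2 * (π / (N * L)))))) := by
    unfold arcM
    rw [← map_finset_sum _ _ measurable_mk2, tile_sum _ _ (by positivity) (N * L)]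
  rw [harcsum]
  have hend : -(π / ((N : ℝ) * L)) + ((N * L : ℕ) : ℝ) * (2 * (π / (N * L)))
      = -(π / ((N : ℝ) * L)) + 2 * π := by
    push_cast
    field_simp
  rw [hend]
  have hfull : Measure.map (fun x : ℝ => (x : AddCircle (2 * π)))
      (volume.restrict (Set.Ico (-(π / ((N : ℝ) * L))) (-(π / ((N : ℝ) * L)) + 2 * π)))
      = (volume : Measure (AddCircle (2 * π))) := by
    rw [Measure.restrict_congr_set Ico_ae_eq_Ioc]
    exact (AddCircle.measurePreserving_mk (2 * π) (-(π / ((N : ℝ) * L)))).map_eq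
  rw [hfull, circleUniform, AddCircle.measure_univ]
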